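/- Fix n ≥ 2 and real numbers k_0,…,k_{n-1}, l_0,…,l_{n-1} with all 1 + k_r + l_s ≠ 0 and n + Σ_{r=0}^{n-1}(k_r + l_r) ≠ 0. Then, as x → ∞ along the reals, F_n(k_0,…,k_{n-1},x ; l_0,…,l_{n-1},x+1) tends to (n / (n + Σ_{r=0}^{n-1}(k_r + l_r))) · F_{n-1}(k_0,…,k_{n-1} ; l_0,…,l_{n-1}). -/

import Mathlib

open Finset Filter

private lemma lin_tendsto (a b c d : ℝ) (hc : c ≠ 0) :
    Tendsto (fun x : ℝ => (a * x + b) / (c * x + d)) atTop (nhds (a / c)) := by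
  have hb : Tendsto (fun x : ℝ => a + b / x) atTop (nhds a) := by
    have := (tendsto_inv_atTop_zero (𝕜 := ℝ)).const_mul b
    simpa [div_eq_mul_inv] using tendsto_const_nhds.add this
  have hd : Tendsto (fun x : ℝ => c + d / x) atTop (nhds c) := by
    have := (tendsto_inv_atTop_zero (𝕜 := ℝ)).const_mul d
    simpa [div_eq_mul_inv] using tendsto_const_nhds.add this
  have h1 : Tendsto (fun x : ℝ => (a + b / x) / (c + d / x)) atTop (nhds (a / c)) :=
    hb.div hd hc
  refine h1.congr' ?_
  filter_upwards [eventually_gt_atTop (0 : ℝ)] with x hx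
  have hx0 : x ≠ 0 := ne_of_gt hx
  have e1 : (a + b / x) * x = a * x + b := by field_simp
  have e2 : (c + d / x) * x = c * x + d := by field_simp
  rw [← e1, ← e2, mul_div_mul_right _ _ hx0]

/-- The closed formula `F_n` for the remainder `R_n(I)`. -/
noncomputable def F (n : ℕ) (i j : ℕ → ℝ) : ℝ :=
  (Nat.factorial n : ℝ) * ((n : ℝ) + 1 + ∑ k ∈ Finset.range (n + 1), (i k + j k)) *
    (∏ k ∈ Finset.range (n + 1), ∏ l ∈ Finset.Ioo k (n + 1), ((i k - i l) * (j k - j l))) /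
    (∏ k ∈ Finset.range (n + 1), ∏ l ∈ Finset.range (n + 1), (1 + i k + j l))

/-- The constant-term identity: appending the pair `(x, x+1)` to the index lists and
letting `x → ∞`, the closed formula `F_n` tends to `(n / (n + Σ)) · F_{n-1}`. -/
theorem F_limit_append (n : ℕ) (hn : 2 ≤ n) (k l : ℕ → ℝ)
    (hne : ∀ r s, r < n → s < n → 1 + k r + l s ≠ 0)
    (hsum : (n : ℝ) + ∑ r ∈ Finset.range n, (k r + l r) ≠ 0) :
    Tendsto
      (fun x : ℝ =>
        F n (fun m => if m = n then x else k m) (fun m => if m = n then x + 1 else l m))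
      atTop
      (nhds (((n : ℝ) / ((n : ℝ) + ∑ r ∈ Finset.range n, (k r + l r))) *
        F (n - 1) k l)) := by
  set S : ℝ := ∑ r ∈ Finset.range n, (k r + l r) with hS
  set P : ℝ := ∏ a ∈ Finset.range n, ∏ b ∈ Finset.Ioo a n, ((k a - k b) * (l a - l b)) with hP
  set D : ℝ := ∏ a ∈ Finset.range n, ∏ b ∈ Finset.range n, (1 + k a + l b) with hD
  set C : ℝ := (Nat.factorial n : ℝ) * P / D with hC
  set H : ℝ → ℝ := fun x =>
    (((n : ℝ) + 1 + (S + (x + (x + 1)))) / (1 + x + (x + 1))) *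
      ∏ r ∈ Finset.range n,
        ((k r - x) * (l r - (x + 1))) / ((1 + k r + (x + 1)) * (1 + x + l r)) with hH
  -- Step 1: the function is pointwise equal to `C * H x`.
  have hF : ∀ x : ℝ,
      F n (fun m => if m = n then x else k m) (fun m => if m = n then x + 1 else l m)
        = C * H x := by
    intro x
    have hs : ∑ m ∈ Finset.range (n + 1),
        ((if m = n then x else k m) + (if m = n then x + 1 else l m))
        = S + (x + (x + 1)) := by
      rw [Finset.sum_range_succ, if_pos rfl, if_pos rfl, hS]
      congr 1
      refine Finset.sum_congr rfl fun m hm => ?_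
      have hmn : m ≠ n := (Finset.mem_range.mp hm).ne
      rw [if_neg hmn, if_neg hmn]
    have hIoo : ∀ a : ℕ, a < n → Finset.Ioo a (n + 1) = insert n (Finset.Ioo a n) := by
      intro a ha
      ext b
      simp only [Finset.mem_Ioo, Finset.mem_insert]
      omega
    have hIoon : Finset.Ioo n (n + 1) = (∅ : Finset ℕ) := by
      ext b; simp only [Finset.mem_Ioo, Finset.notMem_empty, iff_false]; omega
    have inner2 : ∀ a ∈ Finset.range n, ∏ b ∈ Finset.Ioo a (n + 1),
        (((if a = n then x else k a) - (if b = n then x else k b)) *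
          ((if a = n then x + 1 else l a) - (if b = n then x + 1 else l b)))
        = (∏ b ∈ Finset.Ioo a n, ((k a - k b) * (l a - l b))) * ((k a - x) * (l a - (x + 1))) := by
      intro a ha
      have han : a < n := Finset.mem_range.mp ha
      rw [hIoo a han, Finset.prod_insert (by simp)]
      simp only [if_pos rfl, if_neg han.ne]
      rw [mul_comm]
      congr 1
      refine Finset.prod_congr rfl fun b hb => ?_
      have hbn : b ≠ n := (Finset.mem_Ioo.mp hb).2.ne
      simp only [if_neg han.ne, if_neg hbn]
    have hp2 : ∏ a ∈ Finset.range (n + 1), ∏ b ∈ Finset.Ioo a (n + 1),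
        (((if a = n then x else k a) - (if b = n then x else k b)) *
          ((if a = n then x + 1 else l a) - (if b = n then x + 1 else l b)))
        = P * ∏ a ∈ Finset.range n, ((k a - x) * (l a - (x + 1))) := by
      rw [Finset.prod_range_succ, hIoon, Finset.prod_empty, mul_one]
      rw [Finset.prod_congr rfl inner2, Finset.prod_mul_distrib]
    have innerD : ∀ a ∈ Finset.range n, ∏ b ∈ Finset.range (n + 1),
        (1 + (if a = n then x else k a) + (if b = n then x + 1 else l b))
        = (∏ b ∈ Finset.range n, (1 + k a + l b)) * (1 + k a + (x + 1)) := by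
      intro a ha
      have han : a < n := Finset.mem_range.mp ha
      rw [Finset.prod_range_succ]
      simp only [if_pos rfl, if_neg han.ne]
      congr 1
      refine Finset.prod_congr rfl fun b hb => ?_
      have hbn : b ≠ n := (Finset.mem_range.mp hb).ne
      simp only [if_neg han.ne, if_neg hbn]
    have hden : ∏ a ∈ Finset.range (n + 1), ∏ b ∈ Finset.range (n + 1),
        (1 + (if a = n then x else k a) + (if b = n then x + 1 else l b))
        = (D * ∏ a ∈ Finset.range n, (1 + k a + (x + 1))) *
          ((∏ b ∈ Finset.range n, (1 + x + l b)) * (1 + x + (x + 1))) := by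
      rw [Finset.prod_range_succ]
      congr 1
      · rw [Finset.prod_congr rfl innerD, Finset.prod_mul_distrib]
      · rw [Finset.prod_range_succ]
        simp only [if_pos rfl]
        congr 1
        refine Finset.prod_congr rfl fun b hb => ?_
        have hbn : b ≠ n := (Finset.mem_range.mp hb).ne
        simp [hbn]
    simp only [F]
    rw [hs, hp2, hden, hC, hH]
    simp only [Finset.prod_div_distrib, Finset.prod_mul_distrib]
    generalize (∏ a ∈ Finset.range n, (k a - x)) = A1
    generalize (∏ a ∈ Finset.range n, (l a - (x + 1))) = A2
    generalize (∏ a ∈ Finset.range n, (1 + k a + (x + 1))) = B1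
    generalize (∏ a ∈ Finset.range n, (1 + x + l a)) = B2
    simp only [div_eq_mul_inv, mul_inv]
    ring
  -- Step 2: `H` tends to `1`.
  have hH1 : Tendsto H atTop (nhds 1) := by
    have h0 : Tendsto (fun x : ℝ => ((n : ℝ) + 1 + (S + (x + (x + 1)))) / (1 + x + (x + 1)))
        atTop (nhds 1) := by
      have := lin_tendsto 2 ((n : ℝ) + 2 + S) 2 2 (by norm_num)
      have h2 : (2 : ℝ) / 2 = 1 := by norm_num
      rw [h2] at this
      exact this.congr fun x => by ring
    have hg : ∀ r ∈ Finset.range n, Tendsto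
        (fun x : ℝ => ((k r - x) * (l r - (x + 1))) / ((1 + k r + (x + 1)) * (1 + x + l r)))
        atTop (nhds 1) := by
      intro r _
      have h1 := lin_tendsto (-1) (k r) 1 (2 + k r) one_ne_zero
      have h2 := lin_tendsto (-1) (l r - 1) 1 (1 + l r) one_ne_zero
      have hmul := h1.mul h2
      have hval : (-1 : ℝ) / 1 * (-1 / 1) = 1 := by norm_num
      rw [hval] at hmul
      refine hmul.congr fun x => ?_
      rw [div_mul_div_comm]
      ring_nf
    have hprod := tendsto_finset_prod (Finset.range n) hg
    have := h0.mul hprod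
    simpa [hH] using this
  -- Step 3: identify the limit value.
  have hval : ((n : ℝ) / ((n : ℝ) + S)) * F (n - 1) k l = C := by
    have hn1 : n - 1 + 1 = n := by omega
    have hcast : ((n - 1 : ℕ) : ℝ) = (n : ℝ) - 1 := by
      have : (1 : ℕ) ≤ n := by omega
      push_cast [Nat.cast_sub this]
      ring
    have hFn1 : F (n - 1) k l
        = (Nat.factorial (n - 1) : ℝ) * (((n : ℝ)) + S) * P / D := by
      simp only [F, hn1, hcast, hP, hD, hS]
      ring_nf
    rw [hFn1, hC]
    have hfac : (Nat.factorial n : ℝ) = (n : ℝ) * (Nat.factorial (n - 1) : ℝ) := by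
      rw [← Nat.mul_factorial_pred (show n ≠ 0 by omega)]
      push_cast
      ring
    rw [hfac]
    rw [div_mul_div_comm]
    rw [show (n : ℝ) * ((Nat.factorial (n - 1) : ℝ) * ((n : ℝ) + S) * P)
        = ((n : ℝ) + S) * ((n : ℝ) * (Nat.factorial (n - 1) : ℝ) * P) from by ring]
    rw [show ((n : ℝ) + S) * D = ((n : ℝ) + S) * D from rfl]
    rw [mul_div_mul_left _ _ hsum]
  have main : Tendsto (fun x : ℝ => C * H x) atTop (nhds (C * 1)) :=
    tendsto_const_nhds.mul hH1
  rw [mul_one] at main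
  rw [hval]
  exact main.congr fun x => (hF x).symm
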